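/- arXiv:2502.04136 — 2 statements merged into one kernel-verified Lean document; each statement's English description precedes it below -/
import Mathlib

section
/- For r ≥ 2 and a finite set S with |S| not divisible by r, the number of r-regular permutations of S equals |S| times the number of r-regular permutations of S with one element removed; that is, there is a bijection from Reg_r(S) to the set of pairs (x, π) with x ∈ S and π an r-regular permutation of S \ {x}. -/
open Finset

section Arith
variable (r : ℕ) [NeZero r]

def ragPP : ℕ → ℕ × (ZMod r → ℕ)
  | 0 => (1, fun c => if c = 1 then 1 else 0)
  | n+1 =>
    let p := ragPP n
    (p.1 + (n+1) * ∑ c ∈ Finset.univ.erase (-1), p.2 c,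
      fun c => (n+1) * p.2 (c-1) + if c = 1 then p.1 else 0)

def raga : ℕ → ℕ
  | 0 => 1
  | n+1 => (ragPP r n).1

def ragg (k : ℕ) (c : ZMod r) : ℕ := (ragPP r k).2 c

lemma raga_zero : raga r 0 = 1 := rfl
lemma raga_one : raga r 1 = 1 := rfl
lemma ragg_zero (c : ZMod r) : ragg r 0 c = if c = 1 then 1 else 0 := rfl

lemma raga_succ_succ (n : ℕ) :
    raga r (n+2) = raga r (n+1) + (n+1) * ∑ c ∈ Finset.univ.erase (-1), ragg r n c := by
  cases n with
  | zero => simp [raga, ragg, ragPP]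
  | succ m => simp [raga, ragg, ragPP]

lemma ragg_succ (k : ℕ) (c : ZMod r) :
    ragg r (k+1) c = (k+1) * ragg r k (c-1) + if c = 1 then raga r (k+1) else 0 := by
  cases k with
  | zero => simp [raga, ragg, ragPP]
  | succ m => simp [raga, ragg, ragPP]

/-- closed form for `ragg` -/
lemma ragg_eq_sum (k : ℕ) (c : ZMod r) :
    ragg r k c = ∑ j ∈ Finset.range (k+1),
      if ((j+1 : ℕ) : ZMod r) = c then k.descFactorial j * raga r (k-j) else 0 := by
  induction k generalizing c with
  | zero => simp [ragg_zero, raga_zero, eq_comm]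
  | succ k ih =>
    rw [ragg_succ, ih (c-1)]
    conv_rhs => rw [Finset.sum_range_succ']
    rw [Finset.mul_sum]
    simp only [Nat.succ_descFactorial_succ, Nat.cast_one, Nat.descFactorial_zero, one_mul,
      Nat.succ_sub_succ]
    congr 1
    · refine Finset.sum_congr rfl fun j hj => ?_
      rw [mul_ite, mul_zero]
      congr 1
      · rw [eq_iff_iff]
        constructor
        · intro h; push_cast at h ⊢; linear_combination h
        · intro h; push_cast at h ⊢; linear_combination h
      · ring
    · have h1 : ((0+1 : ℕ) : ZMod r) = 1 := by norm_num
      simp [h1, eq_comm]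

/-- summing `ragg` over a set of residues -/
lemma ragg_sum_over (k : ℕ) (s : Finset (ZMod r)) :
    ∑ c ∈ s, ragg r k c = ∑ j ∈ Finset.range (k+1),
      if ((j+1 : ℕ) : ZMod r) ∈ s then k.descFactorial j * raga r (k-j) else 0 := by
  simp only [ragg_eq_sum]
  rw [Finset.sum_comm]
  refine Finset.sum_congr rfl fun j _ => ?_
  rw [Finset.sum_ite_eq s (((j+1 : ℕ)) : ZMod r) (fun _ => k.descFactorial j * raga r (k-j))]

/-- first-cycle decomposition identity -/
lemma raga_eq_sum (hr : 2 ≤ r) (m : ℕ) :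
    raga r (m+1) = ∑ j ∈ Finset.range (m+1),
      if ((j+1 : ℕ) : ZMod r) ≠ 0 then m.descFactorial j * raga r (m-j) else 0 := by
  haveI : Fact (1 < r) := ⟨hr⟩
  induction m with
  | zero => simp [raga_one, raga_zero]
  | succ m ih =>
    rw [raga_succ_succ, ragg_sum_over]
    conv_rhs => rw [Finset.sum_range_succ']
    rw [Finset.mul_sum]
    simp only [Nat.succ_descFactorial_succ, Nat.cast_one, Nat.descFactorial_zero, one_mul,
      Nat.succ_sub_succ, Nat.sub_zero]
    rw [add_comm]
    congr 1
    · refine Finset.sum_congr rfl fun j hj => ?_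
      rw [mul_ite, mul_zero]
      congr 1
      · rw [eq_iff_iff, Finset.mem_erase]
        simp only [Finset.mem_univ, and_true]
        constructor
        · intro h hc
          apply h
          have : ((j+1+1 : ℕ) : ZMod r) = ((j+1:ℕ) : ZMod r) + 1 := by push_cast; ring
          rw [this] at hc
          linear_combination hc
        · intro h hc
          apply h
          have : ((j+1+1 : ℕ) : ZMod r) = ((j+1:ℕ) : ZMod r) + 1 := by push_cast; ring
          rw [hc] at this
          linear_combination this
      · ring
    · have h1 : ((0+1 : ℕ) : ZMod r) ≠ 0 := by norm_num
      simp [h1]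
lemma raga_key (hr : 2 ≤ r) : ∀ n, ¬ r ∣ n → raga r n = n * raga r (n-1) := by
  haveI : Fact (1 < r) := ⟨hr⟩
  intro n
  induction n using Nat.strong_induction_on with
  | _ n ih =>
    intro hn
    match n, hn with
    | 0, hn => exact absurd (dvd_zero r) hn
    | 1, hn => simp [raga_one, raga_zero]
    | (m+2), hn =>
      have key : ∑ j ∈ Finset.range (m+1),
          (if ((j+1 : ℕ) : ZMod r) = -1 then m.descFactorial j * raga r (m-j) else 0) =
          ∑ j ∈ Finset.range (m+1),
          (if ((j+1 : ℕ) : ZMod r) = 0 then m.descFactorial j * raga r (m-j) else 0) := by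
        rw [← Finset.sum_filter, ← Finset.sum_filter]
        refine Finset.sum_nbij' (fun j => j + 1) (fun j => j - 1) ?_ ?_ ?_ ?_ ?_
        · intro j hj
          simp only [Finset.mem_filter, Finset.mem_range] at hj ⊢
          have hjm : j ≠ m := by
            rintro rfl
            apply hn
            rw [← ZMod.natCast_eq_zero_iff]
            have h2 := hj.2
            push_cast at h2 ⊢
            linear_combination h2
          constructor
          · omega
          · push_cast
            push_cast at hj
            linear_combination hj.2
        · intro j hj
          simp only [Finset.mem_filter, Finset.mem_range] at hj ⊢
          have hj0 : j ≠ 0 := by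
            rintro rfl
            have : ((0+1 : ℕ) : ZMod r) = 1 := by norm_num
            rw [this] at hj
            exact one_ne_zero hj.2
          constructor
          · omega
          · have hcast : ((j - 1 + 1 : ℕ) : ZMod r) = ((j : ℕ) : ZMod r) := by
              congr 1
              omega
            rw [hcast]
            have : ((j + 1 : ℕ) : ZMod r) = ((j:ℕ) : ZMod r) + 1 := by push_cast; ring
            rw [this] at hj
            linear_combination hj.2
        · intro j hj; omega
        · intro j hj
          simp only [Finset.mem_filter, Finset.mem_range] at hj
          have hj0 : j ≠ 0 := by
            rintro rfl
            have : ((0+1 : ℕ) : ZMod r) = 1 := by norm_num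
            rw [this] at hj
            exact one_ne_zero hj.2
          omega
        · intro j hj
          simp only [Finset.mem_filter, Finset.mem_range] at hj
          have hjm : j ≠ m := by
            rintro rfl
            apply hn
            rw [← ZMod.natCast_eq_zero_iff]
            have h2 := hj.2
            push_cast at h2 ⊢
            linear_combination h2
          have hjm' : j < m := by omega
          have hIH : raga r (m - j) = (m - j) * raga r (m - j - 1) := by
            refine ih (m - j) (by omega) ?_
            intro hdvd
            apply hn
            rw [← ZMod.natCast_eq_zero_iff] at hdvd ⊢
            rw [Nat.cast_sub (by omega : j ≤ m)] at hdvd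
            have h2 : ((j : ℕ) : ZMod r) = ((j+1 : ℕ) : ZMod r) - 1 := by push_cast; ring
            rw [h2, hj.2] at hdvd
            push_cast at hdvd ⊢
            linear_combination hdvd
          rw [Nat.descFactorial_succ, hIH]
          have : m - (j+1) = m - j - 1 := by omega
          rw [this]
          ring
      have hsum : raga r (m+1) + 0 =
          ∑ j ∈ Finset.range (m+1),
            (if ((j+1 : ℕ) : ZMod r) ≠ -1 then m.descFactorial j * raga r (m-j) else 0) := by
        rw [raga_eq_sum r hr m]
        have hsplit : ∀ (v : ZMod r),
            (∑ j ∈ Finset.range (m+1),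
              (if ((j+1 : ℕ) : ZMod r) ≠ v then m.descFactorial j * raga r (m-j) else 0)) +
            (∑ j ∈ Finset.range (m+1),
              (if ((j+1 : ℕ) : ZMod r) = v then m.descFactorial j * raga r (m-j) else 0)) =
            ∑ j ∈ Finset.range (m+1), m.descFactorial j * raga r (m-j) := by
          intro v
          rw [← Finset.sum_add_distrib]
          refine Finset.sum_congr rfl fun j _ => ?_
          split_ifs <;> simp_all
        have h1 := hsplit 0
        have h2 := hsplit (-1)
        omega
      rw [add_zero] at hsum
      have hrec : raga r (m+2) = raga r (m+1) + (m+1) * raga r (m+1) := by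
        rw [raga_succ_succ, ragg_sum_over]
        congr 2
        rw [hsum]
        refine Finset.sum_congr rfl fun j _ => ?_
        congr 1
        simp [Finset.mem_erase]
      rw [hrec]
      have : (m+2) - 1 = m + 1 := by omega
      rw [this]
      ring

set_option linter.unusedSectionVars false
set_option linter.unnecessarySimpa false

open Equiv Function

section Transport

variable {α γ : Type*}

/-- `permCongr` as a monoid hom. -/
def pcHom (e : α ≃ γ) : Equiv.Perm α →* Equiv.Perm γ where
  toFun := e.permCongr
  map_one' := e.permCongr_refl
  map_mul' := fun σ τ => by
    ext x
    simp [Equiv.permCongr_apply, Equiv.Perm.mul_apply]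

lemma pcHom_zpow_apply (e : α ≃ γ) (σ : Equiv.Perm α) (i : ℤ) (x : α) :
    ((e.permCongr σ) ^ i) (e x) = e ((σ ^ i) x) := by
  have h : (e.permCongr σ) ^ i = e.permCongr (σ ^ i) := by
    have := (pcHom e).map_zpow σ i
    simpa [pcHom] using this.symm
  rw [h]
  simp

lemma pcHom_pow_apply (e : α ≃ γ) (σ : Equiv.Perm α) (n : ℕ) (x : α) :
    ((e.permCongr σ) ^ n) (e x) = e ((σ ^ n) x) := by
  simpa using pcHom_zpow_apply e σ (n : ℤ) x

lemma minimalPeriod_permCongr (e : α ≃ γ) (σ : Equiv.Perm α) (x : α) :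
    minimalPeriod ⇑(e.permCongr σ) (e x) = minimalPeriod ⇑σ x := by
  rw [minimalPeriod_eq_minimalPeriod_iff]
  intro n
  unfold IsPeriodicPt IsFixedPt
  rw [Equiv.Perm.iterate_eq_pow, Equiv.Perm.iterate_eq_pow, pcHom_pow_apply]
  exact ⟨fun h => e.injective h, fun h => by rw [h]⟩

lemma sameCycle_permCongr (e : α ≃ γ) (σ : Equiv.Perm α) (x y : α) :
    (e.permCongr σ).SameCycle (e x) (e y) ↔ σ.SameCycle x y := by
  constructor
  · rintro ⟨i, hi⟩
    exact ⟨i, e.injective (by rw [← pcHom_zpow_apply]; exact hi)⟩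
  · rintro ⟨i, hi⟩
    exact ⟨i, by rw [pcHom_zpow_apply, hi]⟩

end Transport

section Structure

variable {β : Type*} [DecidableEq β] [Fintype β]

lemma perm_mem_periodicPts (σ : Equiv.Perm β) (x : β) : x ∈ periodicPts ⇑σ := by
  refine ⟨orderOf σ, orderOf_pos σ, ?_⟩
  unfold IsPeriodicPt IsFixedPt
  rw [Equiv.Perm.iterate_eq_pow, pow_orderOf_eq_one]
  rfl

variable (π : Equiv.Perm β) (b : β)

local notation "σᵢ" => Equiv.swap (none : Option β) (some b) * π.optionCongr

lemma ins_none : (σᵢ) none = some b := by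
  simp

lemma ins_some (y : β) : (σᵢ) (some y) = if π y = b then none else some (π y) := by
  simp only [Equiv.Perm.mul_apply, Equiv.optionCongr_apply, Option.map_some]
  by_cases h : π y = b
  · simp [h]
  · rw [Equiv.swap_apply_of_ne_of_ne (by simp) (by simp [h]), if_neg h]

lemma ins_iter (k : ℕ) (hk : k < minimalPeriod ⇑π b) :
    (⇑(σᵢ))^[k+1] none = some ((⇑π)^[k] b) := by
  induction k with
  | zero => simpa using ins_none π b
  | succ k ih =>
    rw [iterate_succ_apply', ih (by omega), ins_some]
    rw [← iterate_succ_apply' ⇑π k b]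
    rw [if_neg]
    intro h
    exact not_isPeriodicPt_of_pos_of_lt_minimalPeriod (by omega) hk h

lemma ins_iter_top : (⇑(σᵢ))^[minimalPeriod ⇑π b + 1] none = none := by
  have hp : 0 < minimalPeriod ⇑π b :=
    minimalPeriod_pos_of_mem_periodicPts (perm_mem_periodicPts π b)
  have h1 : minimalPeriod ⇑π b + 1 = (minimalPeriod ⇑π b - 1 + 1) + 1 := by omega
  rw [h1, iterate_succ_apply', ins_iter π b _ (by omega), ins_some]
  rw [← iterate_succ_apply' ⇑π _ b]
  have h2 : (minimalPeriod ⇑π b - 1).succ = minimalPeriod ⇑π b := by omega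
  rw [h2, iterate_minimalPeriod, if_pos rfl]

lemma ins_minimalPeriod_none :
    minimalPeriod ⇑(σᵢ) none = minimalPeriod ⇑π b + 1 := by
  have hp : 0 < minimalPeriod ⇑π b :=
    minimalPeriod_pos_of_mem_periodicPts (perm_mem_periodicPts π b)
  have hper : IsPeriodicPt ⇑(σᵢ) (minimalPeriod ⇑π b + 1) none := ins_iter_top π b
  have hle : minimalPeriod ⇑(σᵢ) none ≤ minimalPeriod ⇑π b + 1 :=
    hper.minimalPeriod_le (by omega)
  have hpos : 0 < minimalPeriod ⇑(σᵢ) none := hper.minimalPeriod_pos (by omega)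
  by_contra hne
  have hlt : minimalPeriod ⇑(σᵢ) none < minimalPeriod ⇑π b + 1 := by omega
  obtain ⟨k, hk⟩ : ∃ k, minimalPeriod ⇑(σᵢ) none = k + 1 := ⟨_, (Nat.succ_pred_eq_of_pos hpos).symm⟩
  have := iterate_minimalPeriod (f := ⇑(σᵢ)) (x := none)
  rw [hk] at this
  rw [ins_iter π b k (by omega)] at this
  exact Option.some_ne_none _ this

lemma ins_sameCycle_of (y : β) (h : π.SameCycle b y) :
    ∃ k < minimalPeriod ⇑π b, (⇑(σᵢ))^[k+1] none = some y := by
  obtain ⟨i, _, hi⟩ := h.exists_pow_eq'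
  have hp : 0 < minimalPeriod ⇑π b :=
    minimalPeriod_pos_of_mem_periodicPts (perm_mem_periodicPts π b)
  refine ⟨i % minimalPeriod ⇑π b, Nat.mod_lt _ hp, ?_⟩
  rw [ins_iter π b _ (Nat.mod_lt _ hp)]
  rw [iterate_mod_minimalPeriod_eq]
  rw [Equiv.Perm.iterate_eq_pow, hi]

lemma ins_minimalPeriod_some_of_sameCycle (y : β) (h : π.SameCycle b y) :
    minimalPeriod ⇑(σᵢ) (some y) = minimalPeriod ⇑π b + 1 := by
  obtain ⟨k, hk, hky⟩ := ins_sameCycle_of π b y h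
  rw [← hky, minimalPeriod_apply_iterate (perm_mem_periodicPts _ none) (k+1)]
  exact ins_minimalPeriod_none π b

lemma ins_sameCycle (y : β) (h : π.SameCycle b y) :
    (σᵢ).SameCycle none (some y) := by
  obtain ⟨k, hk, hky⟩ := ins_sameCycle_of π b y h
  exact ⟨((k+1 : ℕ) : ℤ), by rw [zpow_natCast, ← Equiv.Perm.iterate_eq_pow]; exact hky⟩

lemma ins_iter_not_sameCycle (y : β) (h : ¬ π.SameCycle b y) (k : ℕ) :
    (⇑(σᵢ))^[k] (some y) = some ((⇑π)^[k] y) := by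
  induction k with
  | zero => rfl
  | succ k ih =>
    rw [iterate_succ_apply', ih, ins_some, if_neg, ← iterate_succ_apply' ⇑π k y]
    intro hc
    apply h
    apply Equiv.Perm.SameCycle.symm
    exact ⟨((k+1 : ℕ) : ℤ), by rw [zpow_natCast, ← Equiv.Perm.iterate_eq_pow,
      iterate_succ_apply' ⇑π k y, hc]⟩

lemma ins_minimalPeriod_not_sameCycle (y : β) (h : ¬ π.SameCycle b y) :
    minimalPeriod ⇑(σᵢ) (some y) = minimalPeriod ⇑π y := by
  rw [minimalPeriod_eq_minimalPeriod_iff]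
  intro n
  unfold IsPeriodicPt IsFixedPt
  rw [ins_iter_not_sameCycle π b y h n]
  exact ⟨fun hh => Option.some_injective _ hh, fun hh => by rw [hh]⟩

lemma ins_sameCycle_none_iff (y : β) :
    (σᵢ).SameCycle none (some y) ↔ π.SameCycle b y := by
  constructor
  · intro h
    obtain ⟨i, _, hi⟩ := h.exists_pow_eq'
    have hp : 0 < minimalPeriod ⇑π b :=
      minimalPeriod_pos_of_mem_periodicPts (perm_mem_periodicPts π b)
    have hmp : minimalPeriod ⇑(σᵢ) none = minimalPeriod ⇑π b + 1 := ins_minimalPeriod_none π b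
    have him : (⇑(σᵢ))^[i % (minimalPeriod ⇑π b + 1)] none = some y := by
      rw [← hmp, iterate_mod_minimalPeriod_eq, Equiv.Perm.iterate_eq_pow, hi]
    rcases Nat.eq_zero_or_pos (i % (minimalPeriod ⇑π b + 1)) with h0 | h0
    · rw [h0] at him
      exact absurd him (by simp)
    · obtain ⟨k, hk⟩ : ∃ k, i % (minimalPeriod ⇑π b + 1) = k + 1 :=
        ⟨_, (Nat.succ_pred_eq_of_pos h0).symm⟩
      have hklt : k < minimalPeriod ⇑π b := by
        have := Nat.mod_lt i (y := minimalPeriod ⇑π b + 1) (by omega)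
        omega
      rw [hk, ins_iter π b k hklt] at him
      have : (⇑π)^[k] b = y := Option.some_injective _ him
      exact ⟨(k : ℤ), by rw [zpow_natCast, ← Equiv.Perm.iterate_eq_pow]; exact this⟩
  · exact ins_sameCycle π b y

end Structure

section OC

variable {β : Type*} [DecidableEq β] [Fintype β] (π : Equiv.Perm β)

lemma oc_iter_some (k : ℕ) (y : β) :
    (⇑π.optionCongr)^[k] (some y) = some ((⇑π)^[k] y) := by
  induction k with
  | zero => rfl
  | succ k ih =>
    rw [iterate_succ_apply', ih]
    simp only [Equiv.optionCongr_apply, Option.map_some]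
    rw [← iterate_succ_apply' ⇑π k y]

lemma oc_minimalPeriod_none : minimalPeriod ⇑π.optionCongr none = 1 :=
  minimalPeriod_eq_one_iff_isFixedPt.2 (by simp [IsFixedPt])

lemma oc_minimalPeriod_some (y : β) :
    minimalPeriod ⇑π.optionCongr (some y) = minimalPeriod ⇑π y := by
  rw [minimalPeriod_eq_minimalPeriod_iff]
  intro n
  unfold IsPeriodicPt IsFixedPt
  rw [oc_iter_some π n y]
  exact ⟨fun hh => Option.some_injective _ hh, fun hh => by rw [hh]⟩

lemma oc_sameCycle_none (z : Option β) :
    Equiv.Perm.SameCycle π.optionCongr none z ↔ z = none := by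
  constructor
  · intro h
    have key : ∀ i : ℕ, (⇑π.optionCongr)^[i] (none : Option β) = none := by
      intro i
      induction i with
      | zero => rfl
      | succ k ih => rw [iterate_succ_apply', ih]; simp
    obtain ⟨i, _, hi⟩ := h.exists_pow_eq'
    have := key i
    rw [Equiv.Perm.iterate_eq_pow, hi] at this
    exact this.symm ▸ rfl
  · rintro rfl; exact ⟨0, by simp⟩

end OC

section Char

variable {β : Type*} [DecidableEq β] [Fintype β] (R : ℕ) (π : Equiv.Perm β) (b : β)

local notation "σᵢ" => Equiv.swap (none : Option β) (some b) * π.optionCongr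

lemma char_some_reg :
    (∀ z, ¬ R ∣ minimalPeriod ⇑(σᵢ) z) ↔
      ((∀ y, ¬ π.SameCycle b y → ¬ R ∣ minimalPeriod ⇑π y) ∧
        ¬ R ∣ (minimalPeriod ⇑π b + 1)) := by
  constructor
  · intro h
    refine ⟨fun y hy => ?_, ?_⟩
    · rw [← ins_minimalPeriod_not_sameCycle π b y hy]; exact h (some y)
    · rw [← ins_minimalPeriod_none π b]; exact h none
  · rintro ⟨h1, h2⟩ z
    match z with
    | none => rw [ins_minimalPeriod_none π b]; exact h2
    | some y =>
      by_cases hsc : π.SameCycle b y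
      · rw [ins_minimalPeriod_some_of_sameCycle π b y hsc]; exact h2
      · rw [ins_minimalPeriod_not_sameCycle π b y hsc]; exact h1 y hsc

lemma char_some_pt :
    (∀ z, ¬ (σᵢ).SameCycle none z → ¬ R ∣ minimalPeriod ⇑(σᵢ) z) ↔
      (∀ y, ¬ π.SameCycle b y → ¬ R ∣ minimalPeriod ⇑π y) := by
  constructor
  · intro h y hy
    rw [← ins_minimalPeriod_not_sameCycle π b y hy]
    refine h (some y) ?_
    rw [ins_sameCycle_none_iff]
    exact hy
  · intro h z hz
    match z with
    | none => exact absurd ⟨0, by simp⟩ hz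
    | some y =>
      have hy : ¬ π.SameCycle b y := fun hc => hz (ins_sameCycle π b y hc)
      rw [ins_minimalPeriod_not_sameCycle π b y hy]
      exact h y hy

lemma char_none_reg (hR : 2 ≤ R) :
    (∀ z, ¬ R ∣ minimalPeriod ⇑π.optionCongr z) ↔ (∀ y, ¬ R ∣ minimalPeriod ⇑π y) := by
  constructor
  · intro h y
    rw [← oc_minimalPeriod_some π y]; exact h (some y)
  · intro h z
    match z with
    | none =>
      rw [oc_minimalPeriod_none π]
      intro hd
      have := Nat.le_of_dvd one_pos hd
      omega
    | some y =>
      rw [oc_minimalPeriod_some π y]; exact h y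

lemma char_none_pt :
    (∀ z, ¬ Equiv.Perm.SameCycle π.optionCongr none z → ¬ R ∣ minimalPeriod ⇑π.optionCongr z) ↔
      (∀ y, ¬ R ∣ minimalPeriod ⇑π y) := by
  constructor
  · intro h y
    rw [← oc_minimalPeriod_some π y]
    refine h (some y) ?_
    rw [oc_sameCycle_none]
    exact Option.some_ne_none y
  · intro h z hz
    match z with
    | none => exact absurd ⟨0, by simp⟩ hz
    | some y => rw [oc_minimalPeriod_some π y]; exact h y

end Char

section CountHelpers

universe u v

lemma nat_card_sigma {ι : Type u} [Fintype ι] {f : ι → Type v} [∀ a, Finite (f a)] :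
    Nat.card (Σ a, f a) = ∑ a, Nat.card (f a) := by
  letI : ∀ a, Fintype (f a) := fun a => Fintype.ofFinite _
  simp only [Nat.card_eq_fintype_card]
  exact Fintype.card_sigma

/-- fiber partition of a subtype along a function avoiding a value -/
def partEquiv {γ : Type u} {ι : Type v} (p : γ → Prop) (f : γ → ι) (v : ι) :
    {x : γ // p x ∧ f x ≠ v} ≃ Σ c : {c : ι // c ≠ v}, {x : γ // p x ∧ f x = c.1} where
  toFun x := ⟨⟨f x.1, x.2.2⟩, ⟨x.1, x.2.1, rfl⟩⟩
  invFun s := ⟨s.2.1, s.2.2.1, by rw [s.2.2.2]; exact s.1.2⟩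
  left_inv x := Subtype.ext rfl
  right_inv s := by
    obtain ⟨⟨c, hc⟩, ⟨x, hx1, hx2⟩⟩ := s
    dsimp only at hx2 ⊢
    subst hx2
    rfl

lemma card_partition {γ : Type u} {ι : Type v} [Finite γ] [Fintype ι] [DecidableEq ι]
    (p : γ → Prop) (f : γ → ι) (v : ι) :
    Nat.card {x : γ // p x ∧ f x ≠ v} =
      ∑ c ∈ Finset.univ.erase v, Nat.card {x : γ // p x ∧ f x = c} := by
  rw [Nat.card_congr (partEquiv p f v), nat_card_sigma]
  exact (Finset.sum_subtype (Finset.univ.erase v) (fun x => by simp)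
    (fun c => Nat.card {x : γ // p x ∧ f x = c})).symm

end CountHelpers

section Transport2

variable {α γ : Type*}

lemma reg_transport (R : ℕ) (e : α ≃ γ) :
    Nat.card {σ : Equiv.Perm α // ∀ x, ¬ R ∣ minimalPeriod ⇑σ x} =
      Nat.card {τ : Equiv.Perm γ // ∀ z, ¬ R ∣ minimalPeriod ⇑τ z} := by
  refine Nat.card_congr (e.permCongr.subtypeEquiv fun σ => ?_)
  constructor
  · intro h z
    have : z = e (e.symm z) := by simp
    rw [this, minimalPeriod_permCongr]
    exact h _
  · intro h x
    rw [← minimalPeriod_permCongr e σ x]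
    exact h _

lemma pt_transport (R : ℕ) [NeZero R] (e : α ≃ γ) (a : α) (c : ZMod R) :
    Nat.card {π : Equiv.Perm α //
        (∀ y, ¬ π.SameCycle a y → ¬ R ∣ minimalPeriod ⇑π y) ∧
        ((minimalPeriod ⇑π a : ℕ) : ZMod R) = c} =
      Nat.card {ρ : Equiv.Perm γ //
        (∀ z, ¬ ρ.SameCycle (e a) z → ¬ R ∣ minimalPeriod ⇑ρ z) ∧
        ((minimalPeriod ⇑ρ (e a) : ℕ) : ZMod R) = c} := by
  refine Nat.card_congr (e.permCongr.subtypeEquiv fun π => ?_)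
  have hmp : ∀ x, minimalPeriod ⇑(e.permCongr π) (e x) = minimalPeriod ⇑π x :=
    minimalPeriod_permCongr e π
  constructor
  · rintro ⟨h1, h2⟩
    refine ⟨fun z hz => ?_, by rw [hmp a]; exact h2⟩
    have hze : z = e (e.symm z) := by simp
    rw [hze, hmp]
    refine h1 _ fun hc => ?_
    apply hz
    rw [hze]
    exact (sameCycle_permCongr e π a (e.symm z)).mpr hc
  · rintro ⟨h1, h2⟩
    refine ⟨fun y hy => ?_, by rw [← hmp a]; exact h2⟩
    rw [← hmp y]
    refine h1 (e y) fun hc => ?_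
    exact hy ((sameCycle_permCongr e π a y).mp hc)

/-- equivalence of a type with `Option` of the complement of a point -/
def pointEquiv [DecidableEq α] (a : α) : α ≃ Option {y : α // y ≠ a} where
  toFun y := if h : y = a then none else some ⟨y, h⟩
  invFun o := o.elim a Subtype.val
  left_inv y := by by_cases h : y = a <;> simp [h]
  right_inv o := by
    cases o with
    | none => simp
    | some s => simp [s.2]

lemma pointEquiv_self [DecidableEq α] (a : α) : pointEquiv a a = none := dif_pos rfl

end Transport2

section Decomp

variable (R : ℕ) [NeZero R] {β : Type*} [Fintype β] [DecidableEq β]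

lemma symm_none_eq (π : Equiv.Perm β) :
    Equiv.Perm.decomposeOption.symm (none, π) = π.optionCongr := by
  rw [Equiv.Perm.decomposeOption_symm_apply]
  simp [Equiv.swap_self]
  rfl

lemma symm_some_eq (b : β) (π : Equiv.Perm β) :
    Equiv.Perm.decomposeOption.symm (some b, π) =
      Equiv.swap (none : Option β) (some b) * π.optionCongr := by
  rw [Equiv.Perm.decomposeOption_symm_apply]

lemma dvd_cast_iff (p : ℕ) : (¬ R ∣ (p+1)) ↔ ((p : ℕ) : ZMod R) ≠ (-1 : ZMod R) := by
  rw [← ZMod.natCast_eq_zero_iff]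
  have h : ((p+1 : ℕ) : ZMod R) = 0 ↔ ((p:ℕ) : ZMod R) = -1 := by
    constructor
    · intro h; push_cast at h; linear_combination h
    · intro h; push_cast; linear_combination h
  exact not_congr h

/-- decomposition equivalence restricted to a predicate -/
def decompEquiv (P : Equiv.Perm (Option β) → Prop) :
    {σ : Equiv.Perm (Option β) // P σ} ≃
      Σ x : Option β, {π : Equiv.Perm β // P (Equiv.Perm.decomposeOption.symm (x, π))} :=
  (Equiv.Perm.decomposeOption.subtypeEquiv
      (fun σ => iff_of_eq (by rw [Equiv.symm_apply_apply]))).trans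
    (Equiv.subtypeProdEquivSigmaSubtype
      (fun x (π : Equiv.Perm β) => P (Equiv.Perm.decomposeOption.symm (x, π))))

lemma D1 (hR : 2 ≤ R) :
    Nat.card {σ : Equiv.Perm (Option β) // ∀ z, ¬ R ∣ minimalPeriod ⇑σ z} =
      Nat.card {π : Equiv.Perm β // ∀ y, ¬ R ∣ minimalPeriod ⇑π y} +
      ∑ b : β, Nat.card {π : Equiv.Perm β //
        (∀ y, ¬ π.SameCycle b y → ¬ R ∣ minimalPeriod ⇑π y) ∧
        ((minimalPeriod ⇑π b : ℕ) : ZMod R) ≠ (-1 : ZMod R)} := by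
  rw [Nat.card_congr (decompEquiv (fun σ => ∀ z, ¬ R ∣ minimalPeriod ⇑σ z)), nat_card_sigma,
    univ_option, Finset.sum_insertNone]
  congr 1
  · refine Nat.card_congr (Equiv.subtypeEquivRight fun π => ?_)
    rw [symm_none_eq]
    exact char_none_reg R π hR
  · refine Finset.sum_congr rfl fun b _ => ?_
    refine Nat.card_congr (Equiv.subtypeEquivRight fun π => ?_)
    rw [symm_some_eq]
    exact (char_some_reg R π b).trans (and_congr_right' (dvd_cast_iff R _))

end Decomp

section Decomp2

variable (R : ℕ) [NeZero R] {β : Type*} [Fintype β] [DecidableEq β]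

lemma D2 (c : ZMod R) :
    Nat.card {σ : Equiv.Perm (Option β) //
        (∀ z, ¬ σ.SameCycle none z → ¬ R ∣ minimalPeriod ⇑σ z) ∧
        ((minimalPeriod ⇑σ none : ℕ) : ZMod R) = c} =
      (if c = 1 then Nat.card {π : Equiv.Perm β // ∀ y, ¬ R ∣ minimalPeriod ⇑π y} else 0) +
      ∑ b : β, Nat.card {π : Equiv.Perm β //
        (∀ y, ¬ π.SameCycle b y → ¬ R ∣ minimalPeriod ⇑π y) ∧
        ((minimalPeriod ⇑π b : ℕ) : ZMod R) = c - 1} := by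
  rw [Nat.card_congr (decompEquiv (fun σ =>
      (∀ z, ¬ σ.SameCycle none z → ¬ R ∣ minimalPeriod ⇑σ z) ∧
      ((minimalPeriod ⇑σ none : ℕ) : ZMod R) = c)), nat_card_sigma,
    univ_option, Finset.sum_insertNone]
  congr 1
  · -- none branch
    by_cases hc : c = 1
    · rw [if_pos hc]
      refine Nat.card_congr (Equiv.subtypeEquivRight fun π => ?_)
      rw [symm_none_eq, oc_minimalPeriod_none]
      simp only [Nat.cast_one, hc, eq_self_iff_true, and_true]
      exact char_none_pt R π
    · rw [if_neg hc]
      have : IsEmpty {π : Equiv.Perm β //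
          (∀ z, ¬ Equiv.Perm.SameCycle (Equiv.Perm.decomposeOption.symm (none, π)) none z →
            ¬ R ∣ minimalPeriod ⇑(Equiv.Perm.decomposeOption.symm (none, π)) z) ∧
          ((minimalPeriod ⇑(Equiv.Perm.decomposeOption.symm (none, π)) none : ℕ) : ZMod R) = c} := by
      -- period of none is 1, so cast = 1 ≠ c
        constructor
        rintro ⟨π, h1, h2⟩
        rw [symm_none_eq, oc_minimalPeriod_none] at h2
        simp only [Nat.cast_one] at h2
        exact hc h2.symm
      exact Nat.card_of_isEmpty
  · refine Finset.sum_congr rfl fun b _ => ?_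
    refine Nat.card_congr (Equiv.subtypeEquivRight fun π => ?_)
    rw [symm_some_eq, ins_minimalPeriod_none]
    refine and_congr (char_some_pt R π b) ?_
    constructor
    · intro h; push_cast at h; linear_combination h
    · intro h; push_cast; linear_combination h

end Decomp2

section ArithMore
variable (r : ℕ) [NeZero r]

lemma raga_succ' (m : ℕ) :
    raga r (m+1) = raga r m + m * ∑ c ∈ Finset.univ.erase (-1), ragg r (m-1) c := by
  cases m with
  | zero => simp [raga_one, raga_zero]
  | succ k => simpa using raga_succ_succ r k

lemma ragg_succ' (m : ℕ) (c : ZMod r) :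
    ragg r m c = m * ragg r (m-1) (c-1) + if c = 1 then raga r m else 0 := by
  cases m with
  | zero => simp [ragg_zero, raga_zero]
  | succ k => simpa using ragg_succ r k c

end ArithMore

section Main

universe u

variable (R : ℕ) [NeZero R]

theorem mainCount (hR : 2 ≤ R) : ∀ n : ℕ, ∀ (α : Type u) [Fintype α] [DecidableEq α],
    Fintype.card α = n →
    (Nat.card {σ : Equiv.Perm α // ∀ x, ¬ R ∣ minimalPeriod ⇑σ x} = raga R n) ∧
    (∀ (a : α) (c : ZMod R),
      Nat.card {π : Equiv.Perm α //
        (∀ y, ¬ π.SameCycle a y → ¬ R ∣ minimalPeriod ⇑π y) ∧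
        ((minimalPeriod ⇑π a : ℕ) : ZMod R) = c} = ragg R (n-1) c) := by
  intro n
  induction n using Nat.strong_induction_on with
  | _ n ih =>
  intro α _ _ hcard
  constructor
  · rcases n with _ | m
    · haveI : IsEmpty α := Fintype.card_eq_zero_iff.mp hcard
      haveI : Unique {σ : Equiv.Perm α // ∀ x, ¬ R ∣ minimalPeriod ⇑σ x} :=
        { default := ⟨1, fun x => (IsEmpty.false x).elim⟩
          uniq := fun s => Subtype.ext (Equiv.ext fun x => (IsEmpty.false x).elim) }
      rw [Nat.card_unique, raga_zero]
    · have ha : Nonempty α := Fintype.card_pos_iff.mp (by omega)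
      obtain ⟨a⟩ := ha
      have hβ : Fintype.card {y : α // y ≠ a} = m := by
        have h1 := Fintype.card_congr (pointEquiv a)
        rw [Fintype.card_option] at h1
        omega
      rw [reg_transport R (pointEquiv a), D1 R hR]
      rw [(ih m (by omega) _ hβ).1]
      have hsum : ∀ b : {y : α // y ≠ a},
          Nat.card {π : Equiv.Perm {y : α // y ≠ a} //
            (∀ y, ¬ π.SameCycle b y → ¬ R ∣ minimalPeriod ⇑π y) ∧
            ((minimalPeriod ⇑π b : ℕ) : ZMod R) ≠ (-1 : ZMod R)} =
          ∑ c ∈ Finset.univ.erase (-1 : ZMod R), ragg R (m-1) c := by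
        intro b
        rw [card_partition (fun π : Equiv.Perm {y : α // y ≠ a} =>
            ∀ y, ¬ π.SameCycle b y → ¬ R ∣ minimalPeriod ⇑π y)
          (fun π => ((minimalPeriod ⇑π b : ℕ) : ZMod R)) (-1)]
        exact Finset.sum_congr rfl fun c _ => (ih m (by omega) _ hβ).2 b c
      rw [Finset.sum_congr rfl (fun b _ => hsum b), Finset.sum_const, Finset.card_univ, hβ,
        raga_succ' R m, smul_eq_mul]
  · intro a c
    rcases n with _ | m
    · exact ((Fintype.card_eq_zero_iff.mp hcard).false a).elim
    · have hβ : Fintype.card {y : α // y ≠ a} = m := by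
        have h1 := Fintype.card_congr (pointEquiv a)
        rw [Fintype.card_option] at h1
        omega
      rw [pt_transport R (pointEquiv a) a c]
      simp only [pointEquiv_self]
      rw [D2 R c]
      rw [(ih m (by omega) _ hβ).1]
      have h2 := (ih m (by omega) _ hβ).2
      rw [Finset.sum_congr rfl (fun b _ => h2 b (c-1)), Finset.sum_const, Finset.card_univ, hβ,
        smul_eq_mul]
      rw [Nat.succ_sub_one, ragg_succ' R m c]
      omega

end Main

/-- a bijection from `Reg_r(S)` to pairs `(x, π)` with `x ∈ S` and
`π` an `r`-regular permutation of `S \ {x}`. -/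
theorem stmt2 (r : ℕ) (hr : 2 ≤ r) {S : Type*} [Fintype S] [DecidableEq S]
    (hS : ¬ r ∣ Fintype.card S) :
    Nat.card {σ : Equiv.Perm S // ∀ x, ¬ r ∣ Function.minimalPeriod ⇑σ x} =
      Nat.card (Σ x : S, {π : Equiv.Perm {y : S // y ≠ x} //
        ∀ z, ¬ r ∣ Function.minimalPeriod ⇑π z}) := by
  haveI : NeZero r := ⟨by omega⟩
  have hne : Fintype.card S ≠ 0 := fun h => hS (h ▸ dvd_zero r)
  rw [(mainCount r hr (Fintype.card S) S rfl).1]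
  rw [nat_card_sigma]
  have hx : ∀ x : S,
      Nat.card {π : Equiv.Perm {y : S // y ≠ x} // ∀ z, ¬ r ∣ minimalPeriod ⇑π z} =
        raga r (Fintype.card S - 1) := by
    intro x
    have hcard : Fintype.card {y : S // y ≠ x} = Fintype.card S - 1 := by
      have h1 := Fintype.card_congr (pointEquiv x)
      rw [Fintype.card_option] at h1
      omega
    exact (mainCount r hr (Fintype.card S - 1) {y : S // y ≠ x} hcard).1
  rw [Finset.sum_congr rfl (fun x _ => hx x), Finset.sum_const, Finset.card_univ, smul_eq_mul]
  exact raga_key r hr (Fintype.card S) hS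
end Arith
end

section
/- For all r ≥ 2 and n ≥ 1 with n+1 not divisible by r, |Reg_r(n+1)| = (n+1) · |Reg_r(n)|. -/
open Equiv Function

lemma perm_iterate {N : ℕ} (σ : Perm (Fin N)) (k : ℕ) (x : Fin N) :
    (⇑σ)^[k] x = (σ ^ k) x := by rw [Equiv.Perm.coe_pow]

lemma perm_mem_periodicPts_s3 {N : ℕ} (σ : Perm (Fin N)) (x : Fin N) :
    x ∈ periodicPts ⇑σ := by
  refine ⟨orderOf σ, orderOf_pos σ, ?_⟩
  show (⇑σ)^[orderOf σ] x = x
  rw [perm_iterate, pow_orderOf_eq_one]; rfl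

lemma perm_minimalPeriod_pos {N : ℕ} (σ : Perm (Fin N)) (x : Fin N) :
    0 < minimalPeriod ⇑σ x :=
  minimalPeriod_pos_of_mem_periodicPts (perm_mem_periodicPts_s3 σ x)

lemma sc_of_iter {N : ℕ} (f : Perm (Fin N)) (j : ℕ) (x : Fin N) :
    f.SameCycle x ((⇑f)^[j] x) :=
  ⟨(j : ℤ), by rw [zpow_natCast, ← perm_iterate]⟩

-- insertion of a new point into the cycle of q
def ins {M : ℕ} (τ : Perm (Fin M)) (q : Fin M) : Perm (Fin (M+1)) :=
  Equiv.Perm.decomposeFin.symm (q.succ, τ)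

lemma ins_zero {M : ℕ} (τ : Perm (Fin M)) (q : Fin M) : ins τ q 0 = q.succ :=
  Equiv.Perm.decomposeFin_symm_apply_zero _ _

lemma ins_succ {M : ℕ} (τ : Perm (Fin M)) (q x : Fin M) :
    ins τ q x.succ = if τ x = q then 0 else (τ x).succ := by
  show Equiv.Perm.decomposeFin.symm (q.succ, τ) x.succ = _
  rw [Equiv.Perm.decomposeFin_symm_apply_succ]
  rcases eq_or_ne (τ x) q with h | h
  · rw [if_pos h, h, Equiv.swap_apply_right]
  · rw [if_neg h]
    exact Equiv.swap_apply_of_ne_of_ne (Fin.succ_ne_zero _)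
      (fun hc => h (Fin.succ_injective _ hc))

lemma ins_iter_s3 {M : ℕ} (τ : Perm (Fin M)) (q : Fin M) :
    ∀ j, j < minimalPeriod ⇑τ q → (⇑(ins τ q))^[j+1] 0 = ((⇑τ)^[j] q).succ := by
  intro j
  induction j with
  | zero => intro _; simpa using ins_zero τ q
  | succ j ih =>
    intro hj
    have hne : τ ((⇑τ)^[j] q) ≠ q := by
      intro hc
      have hp : IsPeriodicPt ⇑τ (j+1) q := by
        show (⇑τ)^[j+1] q = q
        rw [Function.iterate_succ_apply']; exact hc
      have := hp.minimalPeriod_le (by omega)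
      omega
    rw [Function.iterate_succ_apply', ih (by omega), ins_succ, if_neg hne,
      ← Function.iterate_succ_apply' (⇑τ) j q]

lemma ins_per0 {M : ℕ} (τ : Perm (Fin M)) (q : Fin M) :
    minimalPeriod ⇑(ins τ q) 0 = minimalPeriod ⇑τ q + 1 := by
  have hKpos : 0 < minimalPeriod ⇑τ q := perm_minimalPeriod_pos τ q
  obtain ⟨K', hK⟩ : ∃ K', minimalPeriod ⇑τ q = K' + 1 :=
    ⟨minimalPeriod ⇑τ q - 1, by omega⟩
  rw [hK]
  have hper : IsPeriodicPt ⇑(ins τ q) (K' + 2) 0 := by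
    show (⇑(ins τ q))^[K'+2] 0 = 0
    have hp : (⇑τ)^[K'+1] q = q := by
      rw [← hK]; exact isPeriodicPt_minimalPeriod ⇑τ q
    have hstep : τ ((⇑τ)^[K'] q) = q := by
      rw [← Function.iterate_succ_apply' (⇑τ) K' q]; exact hp
    rw [Function.iterate_succ_apply', ins_iter_s3 τ q K' (by omega), ins_succ, if_pos hstep]
  have hle : minimalPeriod ⇑(ins τ q) 0 ≤ K' + 2 :=
    hper.minimalPeriod_le (show 0 < K' + 2 by omega)
  have hpos : 0 < minimalPeriod ⇑(ins τ q) 0 := perm_minimalPeriod_pos _ _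
  by_contra hne
  have hlt : minimalPeriod ⇑(ins τ q) 0 < K' + 2 := by omega
  obtain ⟨d, hd⟩ : ∃ d, minimalPeriod ⇑(ins τ q) 0 = d + 1 := ⟨minimalPeriod ⇑(ins τ q) 0 - 1, by omega⟩
  have h0 : (⇑(ins τ q))^[d+1] 0 = 0 := by
    rw [← hd]; exact isPeriodicPt_minimalPeriod ⇑(ins τ q) 0
  rw [ins_iter_s3 τ q d (by rw [hK]; omega)] at h0
  exact Fin.succ_ne_zero _ h0

lemma ins_iter_off {M : ℕ} (τ : Perm (Fin M)) (q x : Fin M) (hx : ¬ τ.SameCycle q x) :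
    ∀ j, (⇑(ins τ q))^[j] x.succ = ((⇑τ)^[j] x).succ := by
  intro j
  induction j with
  | zero => rfl
  | succ j ih =>
    have hne : τ ((⇑τ)^[j] x) ≠ q := by
      intro hc
      have hq : (⇑τ)^[j+1] x = q := by
        rw [Function.iterate_succ_apply']; exact hc
      exact hx ((hq ▸ sc_of_iter τ (j+1) x).symm)
    rw [Function.iterate_succ_apply', ih, ins_succ, if_neg hne,
      ← Function.iterate_succ_apply' (⇑τ) j x]

lemma ins_per_off {M : ℕ} (τ : Perm (Fin M)) (q x : Fin M) (hx : ¬ τ.SameCycle q x) :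
    minimalPeriod ⇑(ins τ q) x.succ = minimalPeriod ⇑τ x := by
  rw [minimalPeriod_eq_minimalPeriod_iff]
  intro j
  show (⇑(ins τ q))^[j] x.succ = x.succ ↔ (⇑τ)^[j] x = x
  rw [ins_iter_off τ q x hx j]
  exact ⟨fun h => Fin.succ_injective _ h, fun h => by rw [h]⟩

lemma ins_sc {M : ℕ} (τ : Perm (Fin M)) (q x : Fin M) :
    (ins τ q).SameCycle 0 x.succ ↔ τ.SameCycle q x := by
  have hK : minimalPeriod ⇑(ins τ q) 0 = minimalPeriod ⇑τ q + 1 := ins_per0 τ q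
  set K := minimalPeriod ⇑τ q with hKdef
  have hKpos : 0 < K := perm_minimalPeriod_pos τ q
  constructor
  · intro h
    obtain ⟨i, _, hi⟩ := h.exists_pow_eq'
    rw [← perm_iterate] at hi
    rw [← iterate_mod_minimalPeriod_eq, hK] at hi
    have hjlt : i % (K + 1) < K + 1 := Nat.mod_lt _ (by omega)
    rcases Nat.eq_zero_or_pos (i % (K + 1)) with h0 | hpos
    · rw [h0] at hi
      exact absurd hi.symm (Fin.succ_ne_zero _)
    · obtain ⟨j', hj'⟩ : ∃ j', i % (K + 1) = j' + 1 := ⟨i % (K + 1) - 1, by omega⟩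
      rw [hj', ins_iter_s3 τ q j' (by omega)] at hi
      have := Fin.succ_injective _ hi
      exact this ▸ sc_of_iter τ j' q
  · intro h
    obtain ⟨i, _, hi⟩ := h.exists_pow_eq'
    rw [← perm_iterate, ← iterate_mod_minimalPeriod_eq] at hi
    have hjlt : i % K < K := Nat.mod_lt _ hKpos
    have : (⇑(ins τ q))^[i % K + 1] 0 = x.succ := by
      rw [ins_iter_s3 τ q (i % K) hjlt, hi]
    exact this ▸ sc_of_iter (ins τ q) (i % K + 1) 0
lemma perm_minimalPeriod_le {N : ℕ} (σ : Perm (Fin N)) (x : Fin N) :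
    minimalPeriod ⇑σ x ≤ N := by
  by_contra hlt
  push_neg at hlt
  have hinj : Function.Injective (fun j : Fin (minimalPeriod ⇑σ x) => (⇑σ)^[(j:ℕ)] x) := by
    intro a b hab
    have := iterate_injOn_Iio_minimalPeriod (f := ⇑σ) (x := x)
      (Set.mem_Iio.mpr a.2) (Set.mem_Iio.mpr b.2) hab
    exact Fin.ext this
  have := Fintype.card_le_of_injective _ hinj
  simp at this
  omega

lemma sameCycle_minimalPeriod {N : ℕ} {σ : Perm (Fin N)} {x y : Fin N}
    (h : σ.SameCycle x y) : minimalPeriod ⇑σ y = minimalPeriod ⇑σ x := by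
  obtain ⟨i, _, rfl⟩ := h.exists_pow_eq'
  rw [← perm_iterate]
  exact minimalPeriod_apply_iterate (perm_mem_periodicPts_s3 σ x) i
-- zero insertion: new fixed point
def insZ {M : ℕ} (τ : Perm (Fin M)) : Perm (Fin (M+1)) :=
  Equiv.Perm.decomposeFin.symm (0, τ)

lemma insZ_zero {M : ℕ} (τ : Perm (Fin M)) : insZ τ 0 = 0 :=
  Equiv.Perm.decomposeFin_symm_apply_zero _ _

lemma insZ_succ {M : ℕ} (τ : Perm (Fin M)) (x : Fin M) :
    insZ τ x.succ = (τ x).succ := by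
  show Equiv.Perm.decomposeFin.symm (0, τ) x.succ = _
  rw [Equiv.Perm.decomposeFin_symm_apply_succ, Equiv.swap_self]
  rfl

lemma insZ_per0 {M : ℕ} (τ : Perm (Fin M)) :
    minimalPeriod ⇑(insZ τ) 0 = 1 :=
  minimalPeriod_eq_one_iff_isFixedPt.mpr (insZ_zero τ)

lemma insZ_iter_succ {M : ℕ} (τ : Perm (Fin M)) (x : Fin M) :
    ∀ j, (⇑(insZ τ))^[j] x.succ = ((⇑τ)^[j] x).succ := by
  intro j
  induction j with
  | zero => rfl
  | succ j ih =>
    rw [Function.iterate_succ_apply', ih, insZ_succ,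
      ← Function.iterate_succ_apply' (⇑τ) j x]

lemma insZ_per_succ {M : ℕ} (τ : Perm (Fin M)) (x : Fin M) :
    minimalPeriod ⇑(insZ τ) x.succ = minimalPeriod ⇑τ x := by
  rw [minimalPeriod_eq_minimalPeriod_iff]
  intro j
  show (⇑(insZ τ))^[j] x.succ = x.succ ↔ (⇑τ)^[j] x = x
  rw [insZ_iter_succ τ x j]
  exact ⟨fun h => Fin.succ_injective _ h, fun h => by rw [h]⟩

lemma insZ_iter_zero {M : ℕ} (τ : Perm (Fin M)) (j : ℕ) :
    (⇑(insZ τ))^[j] 0 = 0 := by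
  induction j with
  | zero => rfl
  | succ j ih => rw [Function.iterate_succ_apply', ih, insZ_zero]

lemma insZ_sc {M : ℕ} (τ : Perm (Fin M)) (y : Fin (M+1)) :
    (insZ τ).SameCycle 0 y ↔ y = 0 := by
  constructor
  · intro h
    obtain ⟨i, _, hi⟩ := h.exists_pow_eq'
    rw [← perm_iterate, insZ_iter_zero] at hi
    exact hi.symm
  · rintro rfl; exact Equiv.Perm.SameCycle.refl _ _

-- condition translation for `ins`
lemma cond_ins {M : ℕ} (r k : ℕ) (τ : Perm (Fin M)) (q : Fin M) :
    (minimalPeriod ⇑(ins τ q) 0 = k + 1 ∧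
      ∀ y, ¬ (ins τ q).SameCycle 0 y → ¬ r ∣ minimalPeriod ⇑(ins τ q) y) ↔
    (minimalPeriod ⇑τ q = k ∧
      ∀ x, ¬ τ.SameCycle q x → ¬ r ∣ minimalPeriod ⇑τ x) := by
  rw [ins_per0]
  constructor
  · rintro ⟨h1, h2⟩
    refine ⟨by omega, fun x hx => ?_⟩
    have := h2 x.succ (fun hc => hx ((ins_sc τ q x).mp hc))
    rwa [ins_per_off τ q x hx] at this
  · rintro ⟨h1, h2⟩
    refine ⟨by omega, fun y hy => ?_⟩
    induction y using Fin.cases with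
    | zero => exact absurd (Equiv.Perm.SameCycle.refl _ _) hy
    | succ x =>
      have hx : ¬ τ.SameCycle q x := fun hc => hy ((ins_sc τ q x).mpr hc)
      rw [ins_per_off τ q x hx]
      exact h2 x hx

-- condition translation for `insZ`
lemma cond_insZ {M : ℕ} (r k : ℕ) (τ : Perm (Fin M)) :
    (minimalPeriod ⇑(insZ τ) 0 = k + 1 ∧
      ∀ y, ¬ (insZ τ).SameCycle 0 y → ¬ r ∣ minimalPeriod ⇑(insZ τ) y) ↔
    (k = 0 ∧ ∀ x, ¬ r ∣ minimalPeriod ⇑τ x) := by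
  rw [insZ_per0]
  constructor
  · rintro ⟨h1, h2⟩
    refine ⟨by omega, fun x => ?_⟩
    have := h2 x.succ (fun hc => Fin.succ_ne_zero x ((insZ_sc τ x.succ).mp hc))
    rwa [insZ_per_succ τ x] at this
  · rintro ⟨h1, h2⟩
    refine ⟨by omega, fun y hy => ?_⟩
    induction y using Fin.cases with
    | zero => exact absurd (Equiv.Perm.SameCycle.refl _ _) hy
    | succ x =>
      rw [insZ_per_succ τ x]
      exact h2 x
lemma conj_minimalPeriod {N : ℕ} (c τ : Perm (Fin N)) (x : Fin N) :
    minimalPeriod ⇑(c⁻¹ * τ * c) x = minimalPeriod ⇑τ (c x) := by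
  rw [minimalPeriod_eq_minimalPeriod_iff]
  intro j
  show (⇑(c⁻¹ * τ * c))^[j] x = x ↔ (⇑τ)^[j] (c x) = c x
  rw [perm_iterate, perm_iterate]
  have hc : c⁻¹ * τ * c = c⁻¹ * τ * (c⁻¹)⁻¹ := by simp
  rw [hc, conj_pow]
  constructor
  · intro hh
    have := congrArg c hh
    simpa using this
  · intro hh
    simp [Equiv.Perm.mul_apply, hh]

lemma conj_sameCycle {N : ℕ} (c τ : Perm (Fin N)) (x y : Fin N) :
    (c⁻¹ * τ * c).SameCycle x y ↔ τ.SameCycle (c x) (c y) := by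
  have hc : c⁻¹ * τ * c = c⁻¹ * τ * (c⁻¹)⁻¹ := by simp
  rw [hc, Equiv.Perm.sameCycle_conj]
  simp

noncomputable def F (r m k : ℕ) : ℕ :=
  Nat.card {σ : Equiv.Perm (Fin (m+1)) //
    Function.minimalPeriod ⇑σ 0 = k ∧
      ∀ x, ¬ σ.SameCycle 0 x → ¬ r ∣ Function.minimalPeriod ⇑σ x}

lemma fiber_card (r m k : ℕ) (z : Fin (m+1)) :
    Nat.card {τ : Perm (Fin (m+1)) // minimalPeriod ⇑τ z = k ∧
      ∀ x, ¬ τ.SameCycle z x → ¬ r ∣ minimalPeriod ⇑τ x} = F r m k := by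
  set c : Perm (Fin (m+1)) := Equiv.swap 0 z with hc
  have hc0 : c 0 = z := Equiv.swap_apply_left 0 z
  refine Nat.card_congr ?_
  refine Equiv.subtypeEquiv (α := Perm (Fin (m+1))) ⟨fun τ => c⁻¹ * τ * c, fun τ => c * τ * c⁻¹,
    fun τ => by group, fun τ => by group⟩ ?_
  intro τ
  simp only [Equiv.coe_fn_mk]
  rw [conj_minimalPeriod, hc0]
  constructor
  · rintro ⟨h1, h2⟩
    refine ⟨h1, fun x hx => ?_⟩
    rw [conj_minimalPeriod]
    rw [conj_sameCycle, hc0] at hx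
    exact h2 _ hx
  · rintro ⟨h1, h2⟩
    refine ⟨h1, fun x hx => ?_⟩
    have := h2 (c⁻¹ x) ?_
    · rwa [conj_minimalPeriod, Equiv.Perm.inv_def, Equiv.apply_symm_apply] at this
    · rw [conj_sameCycle, hc0, Equiv.Perm.inv_def, Equiv.apply_symm_apply]
      exact hx
noncomputable def regCard (r n : ℕ) : ℕ :=
  Nat.card {σ : Equiv.Perm (Fin n) // ∀ x, ¬ r ∣ Function.minimalPeriod ⇑σ x}

lemma natcard_sigma {ι : Type*} [Fintype ι] (f : ι → Type*) [∀ i, Finite (f i)] :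
    Nat.card (Σ i, f i) = ∑ i, Nat.card (f i) := by
  letI : ∀ i, Fintype (f i) := fun i => Fintype.ofFinite _
  simp [Nat.card_eq_fintype_card]

lemma natcard_fiberwise {α : Type*} [Fintype α] (P : α → Prop) (f : α → ℕ) (t : Finset ℕ)
    (h : ∀ a, P a → f a ∈ t) :
    Nat.card {a // P a} = ∑ k ∈ t, Nat.card {a // P a ∧ f a = k} := by
  classical
  rw [Nat.card_eq_fintype_card, Fintype.card_subtype,
    Finset.card_eq_sum_card_fiberwise (f := f) (t := t)
      (fun x hx => h x (Finset.mem_filter.mp hx).2)]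
  refine Finset.sum_congr rfl fun k hk => ?_
  rw [Nat.card_eq_fintype_card, Fintype.card_subtype]
  congr 1
  ext a
  simp [Finset.mem_filter, and_assoc]

/-- The recurrence `F r (m+1) (k+1) = (m+1) * F r m k` for `k ≥ 1`. -/
lemma L1 (r m k : ℕ) (hk : 1 ≤ k) : F r (m+1) (k+1) = (m+1) * F r m k := by
  have e1 : {σ : Perm (Fin (m+2)) //
        minimalPeriod ⇑σ 0 = k + 1 ∧
          ∀ y, ¬ σ.SameCycle 0 y → ¬ r ∣ minimalPeriod ⇑σ y} ≃
      Σ p : Fin (m+2), {τ : Perm (Fin (m+1)) //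
        minimalPeriod ⇑(Equiv.Perm.decomposeFin.symm (p, τ)) 0 = k + 1 ∧
          ∀ y, ¬ (Equiv.Perm.decomposeFin.symm (p, τ)).SameCycle 0 y →
            ¬ r ∣ minimalPeriod ⇑(Equiv.Perm.decomposeFin.symm (p, τ)) y} := by
    refine Equiv.trans (Equiv.subtypeEquiv (Equiv.Perm.decomposeFin) (fun σ => ?_))
      (Equiv.subtypeProdEquivSigmaSubtype _)
    rw [Equiv.symm_apply_apply]
  have : F r (m+1) (k+1) = ∑ p : Fin (m+2), Nat.card {τ : Perm (Fin (m+1)) //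
      minimalPeriod ⇑(Equiv.Perm.decomposeFin.symm (p, τ)) 0 = k + 1 ∧
        ∀ y, ¬ (Equiv.Perm.decomposeFin.symm (p, τ)).SameCycle 0 y →
          ¬ r ∣ minimalPeriod ⇑(Equiv.Perm.decomposeFin.symm (p, τ)) y} := by
    rw [F, Nat.card_congr e1, natcard_sigma]
  rw [this, Fin.sum_univ_succ]
  have hz : Nat.card {τ : Perm (Fin (m+1)) //
      minimalPeriod ⇑(Equiv.Perm.decomposeFin.symm ((0 : Fin (m+2)), τ)) 0 = k + 1 ∧
        ∀ y, ¬ (Equiv.Perm.decomposeFin.symm ((0 : Fin (m+2)), τ)).SameCycle 0 y →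
          ¬ r ∣ minimalPeriod ⇑(Equiv.Perm.decomposeFin.symm ((0 : Fin (m+2)), τ)) y} = 0 := by
    have : IsEmpty {τ : Perm (Fin (m+1)) //
        minimalPeriod ⇑(insZ τ) 0 = k + 1 ∧
          ∀ y, ¬ (insZ τ).SameCycle 0 y → ¬ r ∣ minimalPeriod ⇑(insZ τ) y} := by
      refine ⟨fun ⟨τ, hτ⟩ => ?_⟩
      have := (cond_insZ r k τ).mp hτ
      omega
    exact @Nat.card_of_isEmpty _ this
  rw [hz, zero_add]
  have hq : ∀ q : Fin (m+1), Nat.card {τ : Perm (Fin (m+1)) //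
      minimalPeriod ⇑(Equiv.Perm.decomposeFin.symm (q.succ, τ)) 0 = k + 1 ∧
        ∀ y, ¬ (Equiv.Perm.decomposeFin.symm (q.succ, τ)).SameCycle 0 y →
          ¬ r ∣ minimalPeriod ⇑(Equiv.Perm.decomposeFin.symm (q.succ, τ)) y} = F r m k := by
    intro q
    have : Nat.card {τ : Perm (Fin (m+1)) //
        minimalPeriod ⇑(ins τ q) 0 = k + 1 ∧
          ∀ y, ¬ (ins τ q).SameCycle 0 y → ¬ r ∣ minimalPeriod ⇑(ins τ q) y} =
        Nat.card {τ : Perm (Fin (m+1)) // minimalPeriod ⇑τ q = k ∧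
          ∀ x, ¬ τ.SameCycle q x → ¬ r ∣ minimalPeriod ⇑τ x} :=
      Nat.card_congr (Equiv.subtypeEquivRight (fun τ => cond_ins r k τ q))
    exact this.trans (fiber_card r m k q)
  rw [Finset.sum_congr rfl (fun q _ => hq q), Finset.sum_const, Finset.card_univ,
    Fintype.card_fin, smul_eq_mul]

/-- `F r m 1 = regCard r m`. -/
lemma L2 (r m : ℕ) : F r m 1 = regCard r m := by
  have key : ∀ pr : Fin (m+1) × Perm (Fin m),
      (minimalPeriod ⇑(Equiv.Perm.decomposeFin.symm pr) 0 = 1 ∧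
        ∀ y, ¬ (Equiv.Perm.decomposeFin.symm pr).SameCycle 0 y →
          ¬ r ∣ minimalPeriod ⇑(Equiv.Perm.decomposeFin.symm pr) y) ↔
      (pr.1 = 0 ∧ ∀ x, ¬ r ∣ minimalPeriod ⇑pr.2 x) := by
    rintro ⟨p, τ⟩
    induction p using Fin.cases with
    | zero =>
      have h0 := cond_insZ r 0 τ
      constructor
      · intro h
        exact ⟨rfl, (h0.mp h).2⟩
      · intro h
        exact h0.mpr ⟨rfl, h.2⟩
    | succ q =>
      constructor
      · rintro ⟨ha, _⟩
        have ha' : minimalPeriod ⇑(ins τ q) 0 = 1 := ha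
        rw [ins_per0] at ha'
        have h2 : 0 < minimalPeriod ⇑τ q := perm_minimalPeriod_pos τ q
        omega
      · rintro ⟨ha, _⟩
        exact absurd ha (Fin.succ_ne_zero q)
  have e0 : {σ : Perm (Fin (m+1)) //
        minimalPeriod ⇑σ 0 = 1 ∧
          ∀ y, ¬ σ.SameCycle 0 y → ¬ r ∣ minimalPeriod ⇑σ y} ≃
      {pr : Fin (m+1) × Perm (Fin m) //
        minimalPeriod ⇑(Equiv.Perm.decomposeFin.symm pr) 0 = 1 ∧
          ∀ y, ¬ (Equiv.Perm.decomposeFin.symm pr).SameCycle 0 y →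
            ¬ r ∣ minimalPeriod ⇑(Equiv.Perm.decomposeFin.symm pr) y} :=
    Equiv.subtypeEquiv (Equiv.Perm.decomposeFin) (fun σ => by rw [Equiv.symm_apply_apply])
  have e1 := Equiv.subtypeEquivRight key
  have e2 : {pr : Fin (m+1) × Perm (Fin m) // pr.1 = 0 ∧
        ∀ x, ¬ r ∣ minimalPeriod ⇑pr.2 x} ≃
      {τ : Perm (Fin m) // ∀ x, ¬ r ∣ minimalPeriod ⇑τ x} :=
    { toFun := fun x => ⟨x.1.2, x.2.2⟩
      invFun := fun t => ⟨(0, t.1), rfl, t.2⟩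
      left_inv := fun x => by
        obtain ⟨⟨p, τ⟩, h1, h2⟩ := x
        simp only at h1
        subst h1
        rfl
      right_inv := fun t => rfl }
  rw [F, regCard, Nat.card_congr ((e0.trans e1).trans e2)]

lemma reg_zero (r : ℕ) : regCard r 0 = 1 := by
  haveI : Unique (Perm (Fin 0)) :=
    ⟨⟨1⟩, fun σ => Equiv.ext (fun x => x.elim0)⟩
  haveI : Unique {σ : Perm (Fin 0) // ∀ x, ¬ r ∣ minimalPeriod ⇑σ x} :=
    ⟨⟨1, fun x => x.elim0⟩, fun σ => Subtype.ext (Subsingleton.elim _ _)⟩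
  exact Nat.card_unique

lemma reg_one (r : ℕ) (hr : 2 ≤ r) : regCard r 1 = 1 := by
  haveI : Unique (Perm (Fin 1)) :=
    ⟨⟨1⟩, fun σ => Equiv.ext (fun x => Subsingleton.elim _ _)⟩
  haveI : Unique {σ : Perm (Fin 1) // ∀ x, ¬ r ∣ minimalPeriod ⇑σ x} := by
    refine ⟨⟨1, fun x => ?_⟩, fun σ => Subtype.ext (Subsingleton.elim _ _)⟩
    have : minimalPeriod ⇑(1 : Perm (Fin 1)) x = 1 := by
      exact minimalPeriod_eq_one_iff_isFixedPt.mpr rfl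
    rw [this]
    intro hd
    have := Nat.le_of_dvd one_pos hd
    omega
  exact Nat.card_unique

/-- Partition of regular permutations by the length of the cycle of `0`. -/
lemma partition (r m : ℕ) :
    regCard r (m+1) = ∑ k ∈ Finset.Icc 1 (m+1),
      if r ∣ k then 0 else F r m k := by
  rw [regCard, natcard_fiberwise (fun σ : Perm (Fin (m+1)) => ∀ x, ¬ r ∣ minimalPeriod ⇑σ x)
    (fun σ => minimalPeriod ⇑σ 0) (Finset.Icc 1 (m+1))
    (fun σ _ => Finset.mem_Icc.mpr ⟨perm_minimalPeriod_pos σ 0, perm_minimalPeriod_le σ 0⟩)]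
  refine Finset.sum_congr rfl fun k hk => ?_
  by_cases hdvd : r ∣ k
  · rw [if_pos hdvd]
    have : IsEmpty {σ : Perm (Fin (m+1)) //
        (∀ x, ¬ r ∣ minimalPeriod ⇑σ x) ∧ minimalPeriod ⇑σ 0 = k} :=
      ⟨fun ⟨σ, h1, h2⟩ => h1 0 (h2 ▸ hdvd)⟩
    exact Nat.card_of_isEmpty
  · rw [if_neg hdvd, F]
    refine Nat.card_congr (Equiv.subtypeEquivRight (fun σ => ?_))
    constructor
    · rintro ⟨h1, h2⟩
      exact ⟨h2, fun x _ => h1 x⟩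
    · rintro ⟨h1, h2⟩
      refine ⟨fun x => ?_, h1⟩
      by_cases hsc : σ.SameCycle 0 x
      · rw [sameCycle_minimalPeriod hsc, h1]
        exact hdvd
      · exact h2 x hsc
/-- Chain lemma: shortening the marked cycle by one, given the induction hypothesis. -/
lemma chain (r : ℕ) : ∀ j m, j + 2 ≤ m + 1 →
    regCard r (m - j) = (m - j) * regCard r (m - j - 1) →
    F r m (j + 2) = F r m (j + 1) := by
  intro j
  induction j with
  | zero =>
    intro m hm hyp
    obtain ⟨m', rfl⟩ : ∃ m', m = m' + 1 := ⟨m - 1, by omega⟩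
    have hyp' : regCard r (m' + 1) = (m' + 1) * regCard r m' := by
      simpa using hyp
    rw [show (0:ℕ) + 2 = 1 + 1 by rfl, L1 r m' 1 le_rfl, L2, L2]
    exact hyp'.symm
  | succ j ih =>
    intro m hm hyp
    obtain ⟨m', rfl⟩ : ∃ m', m = m' + 1 := ⟨m - 1, by omega⟩
    have hyp' : regCard r (m' - j) = (m' - j) * regCard r (m' - j - 1) := by
      simpa [Nat.succ_sub_succ] using hyp
    have h3 := ih m' (by omega) hyp'
    have h1 : F r (m'+1) ((j+2)+1) = (m'+1) * F r m' (j+2) := L1 r m' (j+2) (by omega)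
    have h2 : F r (m'+1) ((j+1)+1) = (m'+1) * F r m' (j+1) := L1 r m' (j+1) (by omega)
    show F r (m'+1) ((j+2)+1) = F r (m'+1) ((j+1)+1)
    rw [h1, h2, h3]

lemma main_lemma (r : ℕ) (hr : 2 ≤ r) :
    ∀ n, ¬ r ∣ (n + 1) → regCard r (n + 1) = (n + 1) * regCard r n := by
  intro n
  induction n using Nat.strong_induction_on with
  | _ n IH =>
    intro hnd
    rcases n with _ | m
    · rw [reg_one r hr, reg_zero]
    · -- n = m + 1
      classical
      have hr1 : ¬ r ∣ 1 := fun hd => by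
        have := Nat.le_of_dvd one_pos hd; omega
      set s : Finset ℕ := Finset.Ioc 0 (m+1) with hs
      have hIoc : ∀ b : ℕ, Finset.Icc 1 b = Finset.Ioc 0 b := fun b => by
        ext x; simp [Finset.mem_Icc, Finset.mem_Ioc]; omega
      -- the two partition identities
      have hpart2 : regCard r (m+2) = ∑ k ∈ Finset.Ioc 0 (m+2),
          (if r ∣ k then 0 else F r (m+1) k) := by
        rw [partition r (m+1), hIoc]
      have hpart1 : regCard r (m+1) = ∑ j ∈ s,
          (if r ∣ j then 0 else F r m j) := by
        rw [partition r m, hIoc]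
      -- split off k = 1 and shift the rest
      have hsplit : ∑ k ∈ Finset.Ioc 0 (m+2), (if r ∣ k then 0 else F r (m+1) k) =
          F r (m+1) 1 + ∑ j ∈ s, (if r ∣ (j+1) then 0 else F r (m+1) (j+1)) := by
        rw [← Finset.sum_Ioc_consecutive _ (by omega : (0:ℕ) ≤ 1) (by omega : (1:ℕ) ≤ m+2)]
        congr 1
        · have h01 : Finset.Ioc (0:ℕ) 1 = {1} := by
            ext x; simp only [Finset.mem_Ioc, Finset.mem_singleton]; omega
          rw [h01, Finset.sum_singleton, if_neg hr1]
        · have hmap : Finset.Ioc (1:ℕ) (m+2) =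
              Finset.map (addRightEmbedding 1) (Finset.Ioc 0 (m+1)) := by
            rw [Finset.map_add_right_Ioc]
          rw [hmap, Finset.sum_map]
          rfl
      -- rewrite each shifted term with L1
      have hterm : ∀ j ∈ s, (if r ∣ (j+1) then 0 else F r (m+1) (j+1)) =
          (m+1) * (if r ∣ (j+1) then 0 else F r m j) := by
        intro j hj
        have hj1 : 1 ≤ j := by
          rw [hs] at hj; simp [Finset.mem_Ioc] at hj; omega
        by_cases hd : r ∣ (j+1)
        · rw [if_pos hd, if_pos hd, mul_zero]
        · rw [if_neg hd, if_neg hd]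
          obtain ⟨j', rfl⟩ : ∃ j', j = j' + 1 := ⟨j - 1, by omega⟩
          exact L1 r m (j'+1) (by omega)
      -- the crucial exchange of divisibility conditions
      have hdvd_not : ∀ j : ℕ, r ∣ j → ¬ r ∣ (j+1) := by
        intro j h1 h2
        have h3 := Nat.dvd_sub h2 h1
        simp only [Nat.add_sub_cancel_left, Nat.succ_sub_one] at h3
        have h4 : r ∣ 1 := by simpa using h3
        have := Nat.le_of_dvd one_pos h4
        omega
      have hFeq : ∀ j ∈ s.filter (fun j => r ∣ j), F r m j = F r m (j-1) := by
        intro j hj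
        rw [Finset.mem_filter, hs, Finset.mem_Ioc] at hj
        obtain ⟨⟨hj0, hjle⟩, hjd⟩ := hj
        have hj2 : 2 ≤ j := by
          have := Nat.le_of_dvd hj0 hjd; omega
        obtain ⟨jj, rfl⟩ : ∃ jj, j = jj + 2 := ⟨j - 2, by omega⟩
        have hn' : m - jj - 1 < m + 1 := by omega
        have hnd' : ¬ r ∣ (m - jj - 1 + 1) := by
          intro hc
          rw [show m - jj - 1 + 1 = m - jj by omega] at hc
          have : r ∣ (m - jj) + (jj + 2) := Nat.dvd_add hc hjd
          rw [show (m - jj) + (jj + 2) = m + 2 by omega] at this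
          exact hnd this
        have hIH := IH (m - jj - 1) hn' hnd'
        have hyp : regCard r (m - jj) = (m - jj) * regCard r (m - jj - 1) := by
          rw [show m - jj = m - jj - 1 + 1 by omega]
          exact hIH
        have := chain r jj m (by omega) hyp
        rw [show jj + 2 - 1 = jj + 1 by omega]
        exact this
      have hcore : ∑ j ∈ s, (if r ∣ (j+1) then 0 else F r m j) =
          ∑ j ∈ s, (if r ∣ j then 0 else F r m j) := by
        rw [← Finset.sum_filter_add_sum_filter_not s (fun j => r ∣ (j+1))
          (fun j => if r ∣ (j+1) then 0 else F r m j)]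
        rw [← Finset.sum_filter_add_sum_filter_not s (fun j => r ∣ j)
          (fun j => if r ∣ j then 0 else F r m j)]
        have z1 : ∑ j ∈ s.filter (fun j => r ∣ (j+1)),
            (if r ∣ (j+1) then 0 else F r m j) = 0 :=
          Finset.sum_eq_zero fun j hj => if_pos (Finset.mem_filter.mp hj).2
        have z2 : ∑ j ∈ s.filter (fun j => r ∣ j),
            (if r ∣ j then 0 else F r m j) = 0 :=
          Finset.sum_eq_zero fun j hj => if_pos (Finset.mem_filter.mp hj).2
        rw [z1, z2, zero_add, zero_add]
        have w1 : ∑ j ∈ s.filter (fun j => ¬ r ∣ (j+1)),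
            (if r ∣ (j+1) then 0 else F r m j) =
            ∑ j ∈ s.filter (fun j => ¬ r ∣ (j+1)), F r m j :=
          Finset.sum_congr rfl fun j hj => if_neg (Finset.mem_filter.mp hj).2
        have w2 : ∑ j ∈ s.filter (fun j => ¬ r ∣ j),
            (if r ∣ j then 0 else F r m j) =
            ∑ j ∈ s.filter (fun j => ¬ r ∣ j), F r m j :=
          Finset.sum_congr rfl fun j hj => if_neg (Finset.mem_filter.mp hj).2
        rw [w1, w2]
        -- now split each by the other predicate
        rw [← Finset.sum_filter_add_sum_filter_not (s.filter (fun j => ¬ r ∣ (j+1)))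
          (fun j => r ∣ j) (fun j => F r m j)]
        rw [← Finset.sum_filter_add_sum_filter_not (s.filter (fun j => ¬ r ∣ j))
          (fun j => r ∣ (j+1)) (fun j => F r m j)]
        have e1 : (s.filter (fun j => ¬ r ∣ (j+1))).filter (fun j => r ∣ j) =
            s.filter (fun j => r ∣ j) := by
          rw [Finset.filter_filter]
          exact Finset.filter_congr fun j hj => by
            constructor
            · rintro ⟨_, h⟩; exact h
            · intro h; exact ⟨hdvd_not j h, h⟩
        have e2 : (s.filter (fun j => ¬ r ∣ j)).filter (fun j => r ∣ (j+1)) =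
            s.filter (fun j => r ∣ (j+1)) := by
          rw [Finset.filter_filter]
          exact Finset.filter_congr fun j hj => by
            constructor
            · rintro ⟨_, h⟩; exact h
            · intro h
              refine ⟨fun hc => ?_, h⟩
              exact hdvd_not j hc h
        have e3 : (s.filter (fun j => ¬ r ∣ (j+1))).filter (fun j => ¬ r ∣ j) =
            (s.filter (fun j => ¬ r ∣ j)).filter (fun j => ¬ r ∣ (j+1)) := by
          rw [Finset.filter_filter, Finset.filter_filter]
          exact Finset.filter_congr fun j hj => by tauto
        rw [e1, e2, e3]
        congr 1
        -- the bijection j ↦ j - 1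
        refine Finset.sum_nbij' (fun j => j - 1) (fun j => j + 1) ?_ ?_ ?_ ?_ ?_
        · intro j hj
          simp only [Finset.mem_filter, hs, Finset.mem_Ioc] at hj ⊢
          obtain ⟨⟨h0, hle⟩, hd⟩ := hj
          have h2 : 2 ≤ j := by have := Nat.le_of_dvd h0 hd; omega
          refine ⟨⟨by omega, by omega⟩, ?_⟩
          rw [show j - 1 + 1 = j by omega]
          exact hd
        · intro j hj
          simp only [Finset.mem_filter, hs, Finset.mem_Ioc] at hj ⊢
          obtain ⟨⟨h0, hle⟩, hd⟩ := hj
          have hjm : j ≠ m + 1 := by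
            rintro rfl
            exact hnd hd
          exact ⟨⟨by omega, by omega⟩, hd⟩
        · intro j hj
          simp only [Finset.mem_filter, hs, Finset.mem_Ioc] at hj
          omega
        · intro j hj
          omega
        · intro j hj
          exact hFeq j hj
      -- put everything together
      have final : regCard r (m+2) = regCard r (m+1) + (m+1) * regCard r (m+1) := by
        rw [hpart2, hsplit, L2, Finset.sum_congr rfl hterm, ← Finset.mul_sum,
          hcore, ← hpart1]
      rw [final]
      ring
/-- if `r ∤ n+1` then `|Reg_r(n+1)| = (n+1)·|Reg_r(n)|`. -/
theorem stmt3 (r n : ℕ) (hr : 2 ≤ r) (hn : 1 ≤ n) (h : ¬ r ∣ (n + 1)) :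
    Nat.card {σ : Equiv.Perm (Fin (n + 1)) //
        ∀ x, ¬ r ∣ Function.minimalPeriod ⇑σ x} =
      (n + 1) * Nat.card {σ : Equiv.Perm (Fin n) //
        ∀ x, ¬ r ∣ Function.minimalPeriod ⇑σ x} :=
  main_lemma r hr n h
end
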